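/- Tightness example for Proposition on identical capacities: in the instance with m resources each of capacity c ≥ 2 and n = cm agents, where agent 1 is assigned to resource 1, v_{11} = c−1, v_{1j} = 0 for j > 1, e_{1ℓ} = 0 for ℓ in resource 1 and e_{1ℓ} = 1 otherwise, the given assignment X is envy-free for agent 1 (no swap increases her utility), u_1(X) = c − 1, and PROP_1 = u_1(X)·(n² − c)/(n² − n). -/

import Mathlib

open Finset

/-- Assignment obtained by swapping the resources of agents `i` and `j`. -/
def swapA {n m : ℕ} (X : Fin n → Fin m) (i j : Fin n) : Fin n → Fin m :=
  fun k => X (Equiv.swap i j k)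

/-- External value agent `i` obtains in assignment `X`. -/
def eVal {n m : ℕ} (e : Fin n → Fin n → ℝ) (X : Fin n → Fin m) (i : Fin n) : ℝ :=
  ∑ ℓ ∈ Finset.univ.filter (fun ℓ => ℓ ≠ i ∧ X ℓ = X i), e i ℓ

/-- Internal value agent `i` obtains in assignment `X`. -/
def vVal {n m : ℕ} (v : Fin n → Fin m → ℝ) (X : Fin n → Fin m) (i : Fin n) : ℝ :=
  v i (X i)

/-- Total utility of agent `i` in assignment `X`. -/
def util {n m : ℕ} (v : Fin n → Fin m → ℝ) (e : Fin n → Fin n → ℝ)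
    (X : Fin n → Fin m) (i : Fin n) : ℝ :=
  vVal v X i + eVal e X i

/-- Pareto envy-freeness. -/
def PEF {n m : ℕ} (v : Fin n → Fin m → ℝ) (e : Fin n → Fin n → ℝ)
    (X : Fin n → Fin m) : Prop :=
  ∀ i j : Fin n, vVal v (swapA X i j) i ≤ vVal v X i ∨ eVal e (swapA X i j) i ≤ eVal e X i

/-- Envy-freeness. -/
def EF {n m : ℕ} (v : Fin n → Fin m → ℝ) (e : Fin n → Fin n → ℝ)
    (X : Fin n → Fin m) : Prop :=
  ∀ i j : Fin n, util v e (swapA X i j) i ≤ util v e X i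

/-- Proportional share of agent `i`. -/
noncomputable def propShare {n m : ℕ} (v : Fin n → Fin m → ℝ)
    (e : Fin n → Fin n → ℝ) (i : Fin n) : ℝ :=
  (1 / (m : ℝ)) * ∑ j, v i j +
    ((n : ℝ) / (m : ℝ) - 1) * ((1 / ((n : ℝ) - 1)) * ∑ ℓ, e i ℓ)

theorem tightness_identical_capacities {m c : ℕ} (hm : 0 < m) (hc : 2 ≤ c)
    (v : Fin (c * m) → Fin m → ℝ) (e : Fin (c * m) → Fin (c * m) → ℝ)
    (X : Fin (c * m) → Fin m)
    (hcap : ∀ j : Fin m, (Finset.univ.filter (fun a => X a = j)).card = c)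
    (i0 : Fin (c * m)) (j0 : Fin m) (hX0 : X i0 = j0)
    (hv1 : v i0 j0 = (c : ℝ) - 1) (hv0 : ∀ j ≠ j0, v i0 j = 0)
    (he0 : ∀ ℓ, X ℓ = j0 → e i0 ℓ = 0)
    (he1 : ∀ ℓ, X ℓ ≠ j0 → e i0 ℓ = 1) :
    (∀ j, util v e (swapA X i0 j) i0 ≤ util v e X i0) ∧
    util v e X i0 = (c : ℝ) - 1 ∧
    propShare v e i0 =
      ((c : ℝ) - 1) * ((((c * m : ℕ) : ℝ) ^ 2 - c) / (((c * m : ℕ) : ℝ) ^ 2 - ((c * m : ℕ) : ℝ))) := by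
  have hutil : util v e X i0 = (c : ℝ) - 1 := by
    have he : eVal e X i0 = 0 := by
      apply Finset.sum_eq_zero
      intro ℓ hℓ
      simp only [Finset.mem_filter] at hℓ
      exact he0 ℓ (hℓ.2.2.trans hX0)
    simp [util, vVal, he, hX0, hv1]
  refine ⟨?_, hutil, ?_⟩
  · intro j
    rw [hutil]
    by_cases hj : X j = j0
    · -- swap within same resource: utility stays c-1
      have hv : vVal v (swapA X i0 j) i0 = (c : ℝ) - 1 := by
        simp [vVal, swapA, Equiv.swap_apply_left, hj, hv1]
      have he : eVal e (swapA X i0 j) i0 = 0 := by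
        apply Finset.sum_eq_zero
        intro ℓ hℓ
        simp only [Finset.mem_filter] at hℓ
        obtain ⟨-, hℓi, hℓX⟩ := hℓ
        by_cases hℓj : ℓ = j
        · exact he0 ℓ (hℓj ▸ hj)
        · have : swapA X i0 j ℓ = X ℓ := by
            simp [swapA, Equiv.swap_apply_of_ne_of_ne hℓi hℓj]
          rw [this] at hℓX
          have : swapA X i0 j i0 = j0 := by
            simp [swapA, Equiv.swap_apply_left, hj]
          exact he0 ℓ (by rw [hℓX, this])
      simp [util, hv, he]
    · -- swap to another resource
      have hji : j ≠ i0 := fun h => hj (h ▸ hX0)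
      have hv : vVal v (swapA X i0 j) i0 = 0 := by
        simp only [vVal, swapA, Equiv.swap_apply_left]
        exact hv0 (X j) hj
      have hset : Finset.univ.filter
            (fun ℓ => ℓ ≠ i0 ∧ swapA X i0 j ℓ = swapA X i0 j i0)
          = (Finset.univ.filter (fun a => X a = X j)).erase j := by
        ext ℓ
        simp only [Finset.mem_filter, Finset.mem_erase, Finset.mem_univ, true_and]
        have hswi0 : swapA X i0 j i0 = X j := by simp [swapA]
        constructor
        · rintro ⟨hℓi, hℓX⟩
          rw [hswi0] at hℓX
          by_cases hℓj : ℓ = j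
          · subst hℓj
            simp [swapA, Equiv.swap_apply_right, hX0] at hℓX
            exact absurd hℓX.symm hj
          · refine ⟨hℓj, ?_⟩
            rwa [show swapA X i0 j ℓ = X ℓ by
              simp [swapA, Equiv.swap_apply_of_ne_of_ne hℓi hℓj]] at hℓX
        · rintro ⟨hℓj, hℓX⟩
          have hℓi : ℓ ≠ i0 := fun h => hj (by rw [← hℓX, h, hX0])
          refine ⟨hℓi, ?_⟩
          rw [hswi0, show swapA X i0 j ℓ = X ℓ by
            simp [swapA, Equiv.swap_apply_of_ne_of_ne hℓi hℓj]]
          exact hℓX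
      have he : eVal e (swapA X i0 j) i0 = (c : ℝ) - 1 := by
        rw [eVal, hset]
        have hone : ∀ ℓ ∈ (Finset.univ.filter (fun a => X a = X j)).erase j,
            e i0 ℓ = 1 := by
          intro ℓ hℓ
          simp only [Finset.mem_erase, Finset.mem_filter, Finset.mem_univ, true_and] at hℓ
          exact he1 ℓ (hℓ.2 ▸ hj)
        rw [Finset.sum_congr rfl hone, Finset.sum_const, Finset.card_erase_of_mem
          (by simp), hcap (X j)]
        have h1c : 1 ≤ c := le_trans (by norm_num) hc
        rw [nsmul_eq_mul, Nat.cast_sub h1c]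
        push_cast
        ring
      simp [util, hv, he]
  · -- propShare computation
    have hsv : ∑ j, v i0 j = (c : ℝ) - 1 := by
      rw [Finset.sum_eq_single j0 (fun b _ hb => hv0 b hb) (by simp)]
      exact hv1
    have hse : ∑ ℓ, e i0 ℓ = (c : ℝ) * m - c := by
      rw [← Finset.sum_filter_add_sum_filter_not Finset.univ (fun ℓ => X ℓ = j0)]
      have h1 : ∑ ℓ ∈ Finset.univ.filter (fun ℓ => X ℓ = j0), e i0 ℓ = 0 :=
        Finset.sum_eq_zero fun ℓ hℓ => he0 ℓ (Finset.mem_filter.mp hℓ).2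
      have h2 : ∑ ℓ ∈ Finset.univ.filter (fun ℓ => ¬ X ℓ = j0), e i0 ℓ
          = ((Finset.univ.filter (fun ℓ => ¬ X ℓ = j0)).card : ℝ) := by
        rw [Finset.sum_congr rfl fun ℓ hℓ => he1 ℓ (Finset.mem_filter.mp hℓ).2]
        simp
      have hcard : (Finset.univ.filter (fun ℓ => ¬ X ℓ = j0)).card = c * m - c := by
        have := Finset.card_filter_add_card_filter_not
          (s := (Finset.univ : Finset (Fin (c * m)))) (p := fun ℓ => X ℓ = j0)
        rw [hcap j0, Finset.card_univ, Fintype.card_fin] at this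
        omega
      rw [h1, h2, hcard]
      have hle : c ≤ c * m := Nat.le_mul_of_pos_right c hm
      push_cast [Nat.cast_sub hle]
      ring
    rw [propShare, hsv, hse]
    have hM : (0:ℝ) < m := by exact_mod_cast hm
    have hC : (2:ℝ) ≤ c := by exact_mod_cast hc
    have hM1 : (1:ℝ) ≤ m := by exact_mod_cast hm
    have hn2 : (2:ℝ) ≤ (c:ℝ) * m := by nlinarith
    have h1 : ((c * m : ℕ) : ℝ) = (c:ℝ) * m := by push_cast; ring
    rw [h1]
    have hd1 : (c:ℝ) * m - 1 ≠ 0 := by nlinarith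
    have hd2 : ((c:ℝ) * m) ^ 2 - (c:ℝ) * m ≠ 0 := by nlinarith
    have hd3 : (m:ℝ) * c - 1 ≠ 0 := by rw [mul_comm]; exact hd1
    field_simp
    ring
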